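/- Let d ∈ ℕ, let fₙ : ℝᵈ → ℝ be convex functions converging pointwise to f : ℝᵈ → ℝ, and suppose x* ∈ ℝᵈ satisfies f(x) > f(x*) for all x ≠ x* (unique minimizer). If xₙ is any sequence in ℝᵈ with fₙ(xₙ) ≤ fₙ(x*) for every n, then xₙ → x*. -/

import Mathlib

open Filter Metric Set

private lemma coord_dist_le {d : ℕ} (z w : EuclideanSpace ℝ (Fin d)) (i : Fin d) :
    dist (z i) (w i) ≤ dist z w := by
  rw [EuclideanSpace.dist_eq]
  rw [show dist (z i) (w i) = Real.sqrt (dist (z i) (w i) ^ 2) from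
    (Real.sqrt_sq dist_nonneg).symm]
  exact Real.sqrt_le_sqrt (Finset.single_le_sum
    (fun j _ => sq_nonneg (dist (z j) (w j))) (Finset.mem_univ i))

/-- Argmin consistency for convex criteria: if convex `fₙ → f` pointwise, `x*` is the
unique minimizer of `f`, and `fₙ xₙ ≤ fₙ x*` for all `n`, then `xₙ → x*`. -/
theorem stmt8 (d : ℕ) (f : (EuclideanSpace ℝ (Fin d)) → ℝ)
    (fn : ℕ → (EuclideanSpace ℝ (Fin d)) → ℝ)
    (hconv : ∀ n, ConvexOn ℝ Set.univ (fn n))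
    (hpt : ∀ x, Tendsto (fun n => fn n x) atTop (nhds (f x)))
    (xstar : EuclideanSpace ℝ (Fin d))
    (hmin : ∀ x, x ≠ xstar → f xstar < f x)
    (x : ℕ → EuclideanSpace ℝ (Fin d))
    (hx : ∀ n, fn n (x n) ≤ fn n xstar) :
    Tendsto x atTop (nhds xstar) := by
  rcases subsingleton_or_nontrivial (EuclideanSpace ℝ (Fin d)) with hS | hS
  · have hxx : ∀ n, x n = xstar := fun n => Subsingleton.elim _ _
    rw [funext hxx]
    exact tendsto_const_nhds
  -- the limit is convex, hence continuous
  have hfconv : ConvexOn ℝ (univ : Set (EuclideanSpace ℝ (Fin d))) f := by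
    refine ⟨convex_univ, fun u _ v _ a b ha hb hab => ?_⟩
    refine le_of_tendsto_of_tendsto' (hpt _)
      (((hpt u).const_mul a).add ((hpt v).const_mul b)) (fun n => ?_)
    exact (hconv n).2 (mem_univ u) (mem_univ v) ha hb hab
  have hfcont : Continuous f := by
    exact continuousOn_univ.1 (hfconv.continuousOn isOpen_univ)
  rw [Metric.tendsto_nhds]
  intro ε hε
  -- minimum of f on the sphere of radius ε
  obtain ⟨z₀, hz₀S, hz₀min⟩ := (isCompact_sphere xstar ε).exists_isMinOn
    (NormedSpace.sphere_nonempty.2 hε.le) hfcont.continuousOn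
  set m := f z₀ with hm_def
  have hz₀ne : z₀ ≠ xstar := by
    intro h
    rw [mem_sphere, h, dist_self] at hz₀S
    exact hε.ne hz₀S
  have hm : f xstar < m := hmin z₀ hz₀ne
  set δ : ℝ := (m - f xstar) / 4 with hδ_def
  have hδ : 0 < δ := by simp only [hδ_def]; linarith
  -- cube vertices around xstar
  set c : ℝ := 3 * ε with hc_def
  have hc : 0 < c := by positivity
  set V : Set (EuclideanSpace ℝ (Fin d)) :=
    (WithLp.toLp 2 '' Set.univ.pi fun i => ({xstar i - c, xstar i + c} : Set ℝ)) with hV_def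
  have hVfin : V.Finite := (Set.Finite.pi fun i => (Set.finite_singleton _).insert _).image _
  have hball_hull : ball xstar c ⊆ convexHull ℝ V := by
    intro z hz
    have hz' : z.ofLp ∈ convexHull ℝ (Set.univ.pi fun i => ({xstar i - c, xstar i + c} : Set ℝ)) := by
      apply mem_convexHull_pi
      intro i _
      rw [convexHull_pair, segment_eq_Icc (by linarith)]
      have h1 := coord_dist_le z xstar i
      rw [mem_ball] at hz
      rw [Real.dist_eq, abs_le] at h1
      constructor <;> simp <;> linarith
    have := Set.mem_image_of_mem (WithLp.linearEquiv 2 ℝ (Fin d → ℝ)).symm.toLinearMap hz'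
    rw [LinearMap.image_convexHull] at this
    simpa using this
  -- upper bound on V-values of f
  obtain ⟨B₀, hB₀⟩ := (hVfin.image f).bddAbove
  set B : ℝ := B₀ + 1 with hB_def
  have hB : ∀ v ∈ V, f v + 1 ≤ B := fun v hv => by
    have := hB₀ (Set.mem_image_of_mem f hv); simp only [hB_def]; linarith
  set A : ℝ := 2 * (f xstar - 1) - B with hA_def
  set M : ℝ := |A| + |B| with hM_def
  have hM0 : 0 ≤ M := by positivity
  set K : ℝ := 2 * M / ε with hK_def
  have hK0 : 0 ≤ K := by positivity
  -- eventual uniform bound and Lipschitz property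
  have hLip : ∀ n, (∀ v ∈ V, fn n v ≤ f v + 1) → (f xstar - 1 ≤ fn n xstar) →
      LipschitzOnWith K.toNNReal (fn n) (ball xstar (c - ε)) := by
    intro n h1 h2
    have habs : ∀ a, dist a xstar < c → |fn n a| ≤ M := by
      intro a ha
      have haB : fn n a ≤ B := by
        obtain ⟨v, hv, hle⟩ := (hconv n).exists_ge_of_mem_convexHull (subset_univ V)
          (hball_hull (mem_ball.2 ha))
        exact hle.trans (by have := h1 v hv; have := hB v hv; linarith)
      have haA : A ≤ fn n a := by
        set a' : EuclideanSpace ℝ (Fin d) := (2 : ℝ) • xstar - a with ha'_def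
        have ha' : dist a' xstar < c := by
          have : a' - xstar = xstar - a := by rw [ha'_def]; module
          rw [dist_eq_norm, this, ← dist_eq_norm, dist_comm]
          exact ha
        have ha'B : fn n a' ≤ B := by
          obtain ⟨v, hv, hle⟩ := (hconv n).exists_ge_of_mem_convexHull (subset_univ V)
            (hball_hull (mem_ball.2 ha'))
          exact hle.trans (by have := h1 v hv; have := hB v hv; linarith)
        have hmid : fn n xstar ≤ (1/2 : ℝ) * fn n a + (1/2 : ℝ) * fn n a' := by
          have hcc := (hconv n).2 (mem_univ a) (mem_univ a') (by norm_num : (0:ℝ) ≤ 1/2)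
            (by norm_num : (0:ℝ) ≤ 1/2) (by norm_num)
          have heq : (1/2 : ℝ) • a + (1/2 : ℝ) • a' = xstar := by rw [ha'_def]; module
          rwa [heq, smul_eq_mul, smul_eq_mul] at hcc
        simp only [hA_def]; linarith
      rw [abs_le]
      constructor
      · have := neg_abs_le A; have := abs_nonneg B; simp only [hM_def]; linarith
      · have := le_abs_self B; have := abs_nonneg A; simp only [hM_def]; linarith
    have := ((hconv n).subset (subset_univ _) (convex_ball xstar c)).lipschitzOnWith_of_abs_le
      hε habs
    exact this
  -- finite net on the sphere
  obtain ⟨T, hTsub, hTfin, hTcover⟩ := finite_approx_of_totallyBounded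
    (isCompact_sphere xstar ε).totallyBounded (δ / (K + 1)) (by positivity)
  -- collect eventual statements
  have E1 : ∀ᶠ n in atTop, ∀ v ∈ V, fn n v ≤ f v + 1 :=
    (eventually_all_finite hVfin).2 fun v _ => (hpt v).eventually (eventually_le_nhds (by linarith))
  have E2 : ∀ᶠ n in atTop, f xstar - 1 ≤ fn n xstar :=
    (hpt xstar).eventually (eventually_ge_nhds (by linarith))
  have E3 : ∀ᶠ n in atTop, ∀ t ∈ T, f t - δ ≤ fn n t :=
    (eventually_all_finite hTfin).2 fun t _ => (hpt t).eventually (eventually_ge_nhds (by linarith))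
  have E4 : ∀ᶠ n in atTop, fn n xstar ≤ f xstar + δ :=
    (hpt xstar).eventually (eventually_le_nhds (by linarith))
  filter_upwards [E1, E2, E3, E4] with n h1 h2 h3 h4
  by_contra hcon
  push_neg at hcon
  have hD : 0 < dist (x n) xstar := lt_of_lt_of_le hε hcon
  set D := dist (x n) xstar with hD_def
  set t : ℝ := ε / D with ht_def
  have ht0 : 0 < t := by positivity
  have ht1 : t ≤ 1 := by rw [ht_def, div_le_one hD]; exact hcon
  set y : EuclideanSpace ℝ (Fin d) := xstar + t • (x n - xstar) with hy_def
  have hyS : y ∈ sphere xstar ε := by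
    rw [mem_sphere, hy_def, dist_eq_norm]
    have : xstar + t • (x n - xstar) - xstar = t • (x n - xstar) := by module
    rw [this, norm_smul, Real.norm_eq_abs, abs_of_pos ht0, ← dist_eq_norm, ← hD_def, ht_def]
    field_simp
  -- upper bound on fn n y from convexity along the segment
  have hy_le : fn n y ≤ fn n xstar := by
    have hcc := (hconv n).2 (mem_univ xstar) (mem_univ (x n)) (by linarith : (0:ℝ) ≤ 1 - t)
      ht0.le (by ring)
    have heq : (1 - t) • xstar + t • (x n) = y := by rw [hy_def]; module
    rw [heq, smul_eq_mul, smul_eq_mul] at hcc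
    calc fn n y ≤ (1 - t) * fn n xstar + t * fn n (x n) := hcc
      _ ≤ (1 - t) * fn n xstar + t * fn n xstar := by nlinarith [hx n]
      _ = fn n xstar := by ring
  -- lower bound on fn n y from the net and Lipschitz bound
  obtain ⟨t', ht'⟩ := Set.mem_iUnion.1 (hTcover hyS)
  obtain ⟨ht'T, hyt'⟩ := Set.mem_iUnion.1 ht'
  have ht'S : t' ∈ sphere xstar ε := hTsub ht'T
  have hLipn := hLip n h1 h2
  have hyB : y ∈ ball xstar (c - ε) := by
    rw [mem_ball, mem_sphere.1 hyS, hc_def]; linarith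
  have ht'B : t' ∈ ball xstar (c - ε) := by
    rw [mem_ball, mem_sphere.1 ht'S, hc_def]; linarith
  have hdist : dist (fn n y) (fn n t') ≤ K * (δ / (K + 1)) := by
    have hd := hLipn.dist_le_mul y hyB t' ht'B
    rw [Real.coe_toNNReal K hK0] at hd
    exact hd.trans (mul_le_mul_of_nonneg_left (mem_ball.1 hyt').le hK0)
  have hKρ : K * (δ / (K + 1)) ≤ δ := by
    rw [mul_div_assoc']
    rw [div_le_iff₀ (by linarith)]
    nlinarith
  have hy_ge : m - 2 * δ ≤ fn n y := by
    have h5 : f t' - δ ≤ fn n t' := h3 t' ht'T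
    have h6 : m ≤ f t' := hz₀min ht'S
    have h7 : |fn n y - fn n t'| ≤ K * (δ / (K + 1)) := by rwa [Real.dist_eq] at hdist
    have h8 := (abs_le.1 h7).1
    linarith
  have hfinal : fn n xstar ≤ m - 3 * δ := by
    have : f xstar + δ = m - 3 * δ := by rw [hδ_def]; ring
    linarith
  linarith
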